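/- Let n ≥ 3 be odd, set p = (n-1)/2, and let m > 2. Then the double integral ∫_{ℝ^p} ∫_{ℝ^p} (1 + ‖x‖²)^{(1-n)/4} (1 + ‖y‖²)^{(1-n)/4} (1 + log(1 + ‖x‖² + ‖y‖² + ‖x‖²‖y‖²))^{-m} dy dx is finite. -/

import Mathlib

open MeasureTheory Set Metric Measure Real Filter

/-- Integrability over a subtype with the comap measure vs `IntegrableOn`. -/
lemma stmt7_integrable_comap_subtype {α : Type*} [MeasurableSpace α] {μ : Measure α} {s : Set α}
    (hs : MeasurableSet s) {f : α → ℝ} :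
    Integrable (fun x : s => f x) (μ.comap Subtype.val) ↔ IntegrableOn f s μ := by
  rw [IntegrableOn, ← map_comap_subtype_coe hs,
    (MeasurableEmbedding.subtype_coe hs).integrable_map_iff]
  rfl

/-- Tail integrability `∫_1^∞ x⁻¹ (1 + 2 log x)^{-s} dx < ∞` for `s > 1`. -/
lemma stmt7_tail_int {s : ℝ} (hs : 1 < s) :
    IntegrableOn (fun x : ℝ => x⁻¹ * (1 + 2 * Real.log x) ^ (-s)) (Ioi 1) := by
  have hs1 : (1:ℝ) - s ≠ 0 := by linarith
  set G : ℝ → ℝ := fun x => (1 + 2 * Real.log x) ^ (1 - s) / (2 * (1 - s)) with hG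
  have hderiv : ∀ x ∈ Ioi (1:ℝ), HasDerivAt G (x⁻¹ * (1 + 2 * Real.log x) ^ (-s)) x := by
    intro x hx
    have hx1 : (1:ℝ) < x := hx
    have hx0 : (0:ℝ) < x := by linarith
    have hlog : 0 < Real.log x := Real.log_pos hx1
    have hbase : (0:ℝ) < 1 + 2 * Real.log x := by linarith
    have h1 : HasDerivAt (fun y : ℝ => 1 + 2 * Real.log y) (2 * x⁻¹) x :=
      ((Real.hasDerivAt_log hx0.ne').const_mul 2).const_add 1
    have h2 : HasDerivAt (fun y : ℝ => y ^ (1 - s)) ((1 - s) * (1 + 2 * Real.log x) ^ (1 - s - 1))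
        (1 + 2 * Real.log x) := Real.hasDerivAt_rpow_const (Or.inl hbase.ne')
    have h3 := (h2.comp x h1).div_const (2 * (1 - s))
    have key : x⁻¹ * (1 + 2 * Real.log x) ^ (-s)
        = (1 - s) * (1 + 2 * Real.log x) ^ (1 - s - 1) * (2 * x⁻¹) / (2 * (1 - s)) := by
      have : (1:ℝ) - s - 1 = -s := by ring
      rw [this]
      field_simp
    rw [key]
    exact h3
  have hlim : Tendsto G atTop (nhds 0) := by
    have h1 : Tendsto (fun x : ℝ => 1 + 2 * Real.log x) atTop atTop := by
      apply tendsto_atTop_add_const_left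
      exact (Real.tendsto_log_atTop.const_mul_atTop (by norm_num))
    have h2 : Tendsto (fun y : ℝ => y ^ (1 - s)) atTop (nhds 0) := by
      have := tendsto_rpow_neg_atTop (y := s - 1) (by linarith)
      simpa [neg_sub] using this
    have := (h2.comp h1).div_const (2 * (1 - s))
    simpa using this
  have hcont : ContinuousWithinAt G (Ici 1) 1 := by
    apply ContinuousAt.continuousWithinAt
    have hbase : ContinuousAt (fun y : ℝ => 1 + 2 * Real.log y) 1 :=
      ((Real.continuousAt_log (by norm_num)).const_mul 2).const_add 1
    exact (hbase.rpow_const (Or.inl (by simp))).div_const _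
  exact integrableOn_Ioi_deriv_of_nonneg hcont hderiv
    (fun x hx => by
      have hx1 : (1:ℝ) < x := hx
      have hlog : 0 < Real.log x := Real.log_pos hx1
      positivity) hlim

/-- A nonneg radial function is integrable if its radial profile is. -/
lemma stmt7_integrable_radial {E : Type*} [NormedAddCommGroup E] [NormedSpace ℝ E]
    [MeasurableSpace E] [BorelSpace E] [FiniteDimensional ℝ E] [Nontrivial E]
    (μ : Measure E) [μ.IsAddHaarMeasure] {f : ℝ → ℝ}
    (hi : IntegrableOn (fun r => r ^ (Module.finrank ℝ E - 1) * f r) (Ioi 0)) :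
    Integrable (fun x => f ‖x‖) μ := by
  set d := Module.finrank ℝ E - 1 with hd
  have h1 : Integrable (fun y : Ioi (0:ℝ) => f y) (Measure.volumeIoiPow d) := by
    rw [Measure.volumeIoiPow, integrable_withDensity_iff
      ((measurable_subtype_coe.pow_const d).ennreal_ofReal)
      (Filter.Eventually.of_forall fun x => ENNReal.ofReal_lt_top)]
    have : (fun y : Ioi (0:ℝ) => f y * (ENNReal.ofReal (y.1 ^ d)).toReal)
        = fun y : Ioi (0:ℝ) => (fun r : ℝ => r ^ d * f r) y.1 := by
      funext y
      rw [ENNReal.toReal_ofReal (pow_nonneg y.2.out.le d)]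
      ring
    rw [this]
    exact (stmt7_integrable_comap_subtype (f := fun r : ℝ => r ^ d * f r) measurableSet_Ioi).2 hi
  have h2 : Integrable (fun z : sphere (0:E) 1 × Ioi (0:ℝ) => f z.2)
      (μ.toSphere.prod (Measure.volumeIoiPow d)) := by
    have := (integrable_const (1:ℝ) (μ := μ.toSphere)).mul_prod h1
    simpa using this
  have h3 : Integrable (fun x : ({0}ᶜ : Set E) => f ‖x.1‖) (μ.comap Subtype.val) :=
    by have := (μ.measurePreserving_homeomorphUnitSphereProd.integrable_comp_emb
      (Homeomorph.measurableEmbedding _)).2 h2; simpa [Function.comp_def] using this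
  have h4 := (stmt7_integrable_comap_subtype (f := fun x : E => f ‖x‖)
    (measurableSet_singleton (0:E)).compl).1 h3
  rwa [IntegrableOn, MeasureTheory.restrict_compl_singleton] at h4

lemma stmt7_f_cont {c s : ℝ} :
    Continuous (fun r : ℝ => (1 + r^2) ^ c * (1 + Real.log (1 + r^2)) ^ (-s)) := by
  have h1 : Continuous fun r : ℝ => 1 + r^2 := by continuity
  have h2 : ∀ r : ℝ, (1:ℝ) + r^2 ≠ 0 := fun r => by positivity
  have h3 : ∀ r : ℝ, (1:ℝ) + Real.log (1 + r^2) ≠ 0 := fun r => by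
    have : 0 ≤ Real.log (1 + r^2) := Real.log_nonneg (by nlinarith [sq_nonneg r])
    positivity
  exact (h1.rpow_const fun r => Or.inl (h2 r)).mul
    ((continuous_const.add (h1.log h2)).rpow_const fun r => Or.inl (h3 r))

lemma stmt7_oneD {s : ℝ} (hs : 1 < s) {p : ℕ} (hp : 1 ≤ p) :
    IntegrableOn (fun r : ℝ => r ^ (p - 1) *
      ((1 + r^2) ^ (-(p:ℝ)/2) * (1 + Real.log (1 + r^2)) ^ (-s))) (Ioi 0) := by
  have hexp : -(p:ℝ)/2 ≤ 0 := by
    have : (0:ℝ) ≤ (p:ℝ)/2 := by positivity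
    linarith
  have hcont : Continuous (fun r : ℝ => r ^ (p - 1) *
      ((1 + r^2) ^ (-(p:ℝ)/2) * (1 + Real.log (1 + r^2)) ^ (-s))) :=
    (continuous_pow _).mul stmt7_f_cont
  have hnn : ∀ r : ℝ, 0 ≤ r → 0 ≤ r ^ (p - 1) *
      ((1 + r^2) ^ (-(p:ℝ)/2) * (1 + Real.log (1 + r^2)) ^ (-s)) := fun r hr => by
    have := Real.rpow_nonneg (x := 1 + r^2) (by positivity) (-(p:ℝ)/2)
    have := Real.rpow_nonneg (x := 1 + Real.log (1 + r^2))
      (by have : 0 ≤ Real.log (1 + r^2) := Real.log_nonneg (by nlinarith [sq_nonneg r]); linarith) (-s)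
    positivity
  rw [← Ioc_union_Ioi_eq_Ioi (zero_le_one (α := ℝ))]
  apply IntegrableOn.union
  · apply Integrable.mono' (g := fun _ => (1:ℝ))
      (integrableOn_const measure_Ioc_lt_top.ne)
      hcont.aestronglyMeasurable.restrict
    filter_upwards [ae_restrict_mem measurableSet_Ioc] with r hr
    rw [Real.norm_eq_abs, abs_of_nonneg (hnn r hr.1.le)]
    have e1 : r ^ (p - 1) ≤ 1 := pow_le_one₀ hr.1.le hr.2
    have e2 : (1 + r^2 : ℝ) ^ (-(p:ℝ)/2) ≤ 1 :=
      Real.rpow_le_one_of_one_le_of_nonpos (by nlinarith [sq_nonneg r]) hexp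
    have e3 : (1 + Real.log (1 + r^2)) ^ (-s) ≤ 1 :=
      Real.rpow_le_one_of_one_le_of_nonpos
        (by have : 0 ≤ Real.log (1 + r^2) := Real.log_nonneg (by nlinarith [sq_nonneg r]); linarith)
        (by linarith)
    calc r ^ (p - 1) * ((1 + r^2) ^ (-(p:ℝ)/2) * (1 + Real.log (1 + r^2)) ^ (-s))
        ≤ 1 * (1 * 1) := by
          apply mul_le_mul e1 _ _ zero_le_one
          · apply mul_le_mul e2 e3 (Real.rpow_nonneg (by
              have : 0 ≤ Real.log (1 + r^2) := Real.log_nonneg (by nlinarith [sq_nonneg r])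
              linarith) _) (by linarith)
          · exact mul_nonneg (Real.rpow_nonneg (by positivity) _) (Real.rpow_nonneg (by
              have : 0 ≤ Real.log (1 + r^2) := Real.log_nonneg (by nlinarith [sq_nonneg r])
              linarith) _)
      _ = 1 := by ring
  · apply Integrable.mono' (stmt7_tail_int hs) hcont.aestronglyMeasurable.restrict
    filter_upwards [ae_restrict_mem measurableSet_Ioi] with r hr
    have hr1 : (1:ℝ) < r := hr
    have hr0 : (0:ℝ) < r := by linarith
    rw [Real.norm_eq_abs, abs_of_nonneg (hnn r hr0.le)]
    have hlog : 0 < Real.log r := Real.log_pos hr1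
    have e1 : (1 + r^2 : ℝ) ^ (-(p:ℝ)/2) ≤ (r^2 : ℝ) ^ (-(p:ℝ)/2) :=
      Real.rpow_le_rpow_of_nonpos (by positivity) (by nlinarith) hexp
    have e3 : (1 + Real.log (1 + r^2)) ^ (-s) ≤ (1 + 2 * Real.log r) ^ (-s) := by
      apply Real.rpow_le_rpow_of_nonpos (by linarith) _ (by linarith)
      have h2 : Real.log (r^2) = 2 * Real.log r := by
        rw [Real.log_pow]; push_cast; ring
      have : Real.log (r^2) ≤ Real.log (1 + r^2) :=
        Real.log_le_log (by positivity) (by nlinarith)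
      linarith [this, h2.symm.le]
    have e2 : r ^ (p - 1) * (r^2 : ℝ) ^ (-(p:ℝ)/2) = r⁻¹ := by
      rw [← Real.rpow_natCast r 2, ← Real.rpow_natCast r (p-1), ← Real.rpow_mul hr0.le,
        ← Real.rpow_add hr0]
      rw [Nat.cast_sub hp]
      push_cast
      rw [show (p:ℝ) - 1 + 2 * (-(p:ℝ)/2) = -1 by ring, Real.rpow_neg_one]
    calc r ^ (p - 1) * ((1 + r^2) ^ (-(p:ℝ)/2) * (1 + Real.log (1 + r^2)) ^ (-s))
        ≤ r ^ (p - 1) * ((r^2 : ℝ) ^ (-(p:ℝ)/2) * (1 + 2 * Real.log r) ^ (-s)) := by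
          have hb1 : (0:ℝ) ≤ (1 + r^2 : ℝ) ^ (-(p:ℝ)/2) := Real.rpow_nonneg (by positivity) _
          have hb3 : (0:ℝ) ≤ (1 + 2 * Real.log r) ^ (-s) := Real.rpow_nonneg (by linarith) _
          apply mul_le_mul_of_nonneg_left _ (pow_nonneg hr0.le _)
          calc (1 + r^2) ^ (-(p:ℝ)/2) * (1 + Real.log (1 + r^2)) ^ (-s)
              ≤ (1 + r^2) ^ (-(p:ℝ)/2) * (1 + 2 * Real.log r) ^ (-s) :=
                mul_le_mul_of_nonneg_left e3 hb1
            _ ≤ (r^2 : ℝ) ^ (-(p:ℝ)/2) * (1 + 2 * Real.log r) ^ (-s) :=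
                mul_le_mul_of_nonneg_right e1 hb3
      _ = r⁻¹ * (1 + 2 * Real.log r) ^ (-s) := by rw [← mul_assoc, e2]

/-- Integrability of the single-variable factor on `ℝ^p`. -/
lemma stmt7_F_int {p : ℕ} (hp : 1 ≤ p) {s : ℝ} (hs : 1 < s) :
    Integrable (fun x : EuclideanSpace ℝ (Fin p) =>
      (1 + ‖x‖^2) ^ (-(p:ℝ)/2) * (1 + Real.log (1 + ‖x‖^2)) ^ (-s)) := by
  haveI : Nonempty (Fin p) := ⟨⟨0, hp⟩⟩
  haveI : Nontrivial (EuclideanSpace ℝ (Fin p)) := inferInstance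
  have hfin : Module.finrank ℝ (EuclideanSpace ℝ (Fin p)) = p := finrank_euclideanSpace_fin
  exact stmt7_integrable_radial volume
    (f := fun r : ℝ => (1 + r^2) ^ (-(p:ℝ)/2) * (1 + Real.log (1 + r^2)) ^ (-s))
    (by rw [hfin]; exact stmt7_oneD hs hp)

lemma stmt7_pointwise {a b c m : ℝ} (ha : 0 ≤ a) (hb : 0 ≤ b) (hm : 0 ≤ m) :
    ‖(1+a) ^ c * (1+b) ^ c * (1 + Real.log (1 + a + b + a*b)) ^ (-m)‖
      ≤ (1+a) ^ c * (1 + Real.log (1+a)) ^ (-(m/2)) *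
        ((1+b) ^ c * (1 + Real.log (1+b)) ^ (-(m/2))) := by
  have hA0 : 0 ≤ Real.log (1 + a) := Real.log_nonneg (by linarith)
  have hB0 : 0 ≤ Real.log (1 + b) := Real.log_nonneg (by linarith)
  set A := Real.log (1 + a) with hAdef
  set B := Real.log (1 + b) with hBdef
  have hkey : (1:ℝ) + a + b + a*b = (1+a)*(1+b) := by ring
  have hlogeq : Real.log (1 + a + b + a*b) = A + B := by
    rw [hkey, Real.log_mul (by linarith) (by linarith), hAdef, hBdef]
  have c1 : (1 + (A + B)) ^ (-m) ≤ (1 + A) ^ (-(m/2)) * (1 + B) ^ (-(m/2)) := by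
    have h2 : (1+A)*(1+B) ≤ (1 + (A + B))^2 := by nlinarith [mul_nonneg hA0 hB0, sq_nonneg (A+B)]
    have h4 := Real.rpow_le_rpow_of_nonpos (z := -(m/2)) (x := (1+A)*(1+B)) (y := (1 + (A+B))^2)
      (mul_pos (by linarith) (by linarith)) h2 (by linarith : -(m/2) ≤ 0)
    have h5 : ((1 + (A+B) : ℝ)^2) ^ (-(m/2)) = (1 + (A+B)) ^ (-m) := by
      rw [← Real.rpow_natCast (1 + (A+B)) 2, ← Real.rpow_mul (by linarith)]
      norm_num
      congr 1
      ring
    rw [h5] at h4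
    calc (1 + (A+B)) ^ (-m) ≤ ((1+A)*(1+B)) ^ (-(m/2)) := h4
      _ = (1 + A) ^ (-(m/2)) * (1 + B) ^ (-(m/2)) :=
        Real.mul_rpow (by linarith) (by linarith)
  have hn1 : (0:ℝ) ≤ (1 + a) ^ c := Real.rpow_nonneg (by linarith) _
  have hn2 : (0:ℝ) ≤ (1 + b) ^ c := Real.rpow_nonneg (by linarith) _
  have hn3 : (0:ℝ) ≤ (1 + Real.log (1 + a + b + a*b)) ^ (-m) := by
    apply Real.rpow_nonneg
    rw [hlogeq]; linarith
  rw [Real.norm_eq_abs, abs_of_nonneg (mul_nonneg (mul_nonneg hn1 hn2) hn3)]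
  calc (1 + a) ^ c * (1 + b) ^ c * (1 + Real.log (1 + a + b + a*b)) ^ (-m)
      ≤ (1 + a) ^ c * (1 + b) ^ c * ((1 + A) ^ (-(m/2)) * (1 + B) ^ (-(m/2))) := by
        apply mul_le_mul_of_nonneg_left _ (mul_nonneg hn1 hn2)
        rw [hlogeq]
        exact c1
    _ = (1 + a) ^ c * (1 + A) ^ (-(m/2)) * ((1 + b) ^ c * (1 + B) ^ (-(m/2))) := by ring

/-- for `n ≥ 3` odd, `p = (n-1)/2`, `m > 2`, the double integral
`∫∫ (1+‖x‖²)^{(1-n)/4}(1+‖y‖²)^{(1-n)/4}(1+log(1+‖x‖²+‖y‖²+‖x‖²‖y‖²))^{-m}` is finite. -/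
theorem stmt_7 (n p : ℕ) (hn : 3 ≤ n) (hodd : Odd n) (hp : n = 2*p + 1)
    (m : ℝ) (hm : 2 < m) :
    Integrable (fun q : EuclideanSpace ℝ (Fin p) × EuclideanSpace ℝ (Fin p) =>
      (1 + ‖q.1‖^2) ^ (((1:ℝ) - n)/4) * (1 + ‖q.2‖^2) ^ (((1:ℝ) - n)/4) *
        (1 + Real.log (1 + ‖q.1‖^2 + ‖q.2‖^2 + ‖q.1‖^2*‖q.2‖^2)) ^ (-m)) := by
  have hp1 : 1 ≤ p := by omega
  have hs : 1 < m / 2 := by linarith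
  have hexp : ((1:ℝ) - n)/4 = -(p:ℝ)/2 := by
    have : (n:ℝ) = 2 * p + 1 := by exact_mod_cast congrArg Nat.cast hp
    rw [this]; ring
  simp only [hexp]
  -- the dominating product function
  have hF := stmt7_F_int hp1 hs
  have hprod := hF.mul_prod hF
  rw [← MeasureTheory.Measure.volume_eq_prod] at hprod
  -- measurability of the integrand
  have hmeas : Continuous (fun q : EuclideanSpace ℝ (Fin p) × EuclideanSpace ℝ (Fin p) =>
      (1 + ‖q.1‖^2) ^ (-(p:ℝ)/2) * (1 + ‖q.2‖^2) ^ (-(p:ℝ)/2) *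
        (1 + Real.log (1 + ‖q.1‖^2 + ‖q.2‖^2 + ‖q.1‖^2*‖q.2‖^2)) ^ (-m)) := by
    have c1 : Continuous fun q : EuclideanSpace ℝ (Fin p) × EuclideanSpace ℝ (Fin p) =>
        (1:ℝ) + ‖q.1‖^2 := by continuity
    have c2 : Continuous fun q : EuclideanSpace ℝ (Fin p) × EuclideanSpace ℝ (Fin p) =>
        (1:ℝ) + ‖q.2‖^2 := by continuity
    have c3 : Continuous fun q : EuclideanSpace ℝ (Fin p) × EuclideanSpace ℝ (Fin p) =>
        (1:ℝ) + ‖q.1‖^2 + ‖q.2‖^2 + ‖q.1‖^2*‖q.2‖^2 := by continuity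
    have h3 : ∀ q : EuclideanSpace ℝ (Fin p) × EuclideanSpace ℝ (Fin p),
        (1:ℝ) + ‖q.1‖^2 + ‖q.2‖^2 + ‖q.1‖^2*‖q.2‖^2 ≠ 0 := fun q => by positivity
    have c4 : Continuous fun q : EuclideanSpace ℝ (Fin p) × EuclideanSpace ℝ (Fin p) =>
        (1:ℝ) + Real.log (1 + ‖q.1‖^2 + ‖q.2‖^2 + ‖q.1‖^2*‖q.2‖^2) :=
      continuous_const.add (c3.log h3)
    refine ((c1.rpow_const fun q => Or.inl (by positivity)).mul
      (c2.rpow_const fun q => Or.inl (by positivity))).mul (c4.rpow_const fun q => Or.inl ?_)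
    have : 0 ≤ Real.log (1 + ‖q.1‖^2 + ‖q.2‖^2 + ‖q.1‖^2*‖q.2‖^2) := by
      apply Real.log_nonneg
      nlinarith [sq_nonneg ‖q.1‖, sq_nonneg ‖q.2‖, sq_nonneg (‖q.1‖*‖q.2‖), norm_nonneg q.1]
    exact fun h => by nlinarith
  apply hprod.mono' hmeas.aestronglyMeasurable
  filter_upwards with q
  exact stmt7_pointwise (sq_nonneg ‖q.1‖) (sq_nonneg ‖q.2‖) (by linarith)
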